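/- Let T be a k-tensor on ℝⁿ, let H_1,…,H_k be n×n real matrices, let U be an n×n orthogonal matrix, and let σ be a permutation of {1,…,k}. With H̃_i = U^T H_i U for i = 1,…,k, the identity ⟨T, H̃_1 ∘_σ ⋯ ∘_σ H̃_k⟩ = (U(Diag^σ T)U^T)[H_1,…,H_k] holds. -/
import Mathlib


open Finset Matrix

/-- The Kronecker delta on `Fin n`, as a real number. -/
def kdelta {n : ℕ} (a b : Fin n) : ℝ := if a = b then 1 else 0

/-- The `σ`-Hadamard product of the matrices `H 1, ..., H k`:
`(H_1 ∘_σ ⋯ ∘_σ H_k)^{i_1…i_k} = ∏_s H_s^{i_s i_{σ⁻¹(s)}}`. -/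
def hadP {n k : ℕ} (σ : Equiv.Perm (Fin k)) (H : Fin k → Matrix (Fin n) (Fin n) ℝ) :
    (Fin k → Fin n) → ℝ :=
  fun i => ∏ s, H s (i s) (i (σ⁻¹ s))

/-- The inner product of two k-tensors: `⟨T₁, T₂⟩ = Σ_{i_1,…,i_k} T₁^{i_1…i_k} T₂^{i_1…i_k}`. -/
def tinner {n k : ℕ} (T₁ T₂ : (Fin k → Fin n) → ℝ) : ℝ :=
  ∑ i : Fin k → Fin n, T₁ i * T₂ i

/-- `Diag^σ T`: the 2k-tensor `(Diag^σ T)^{i_1…i_k,j_1…j_k} = T^{i_1…i_k} ∏_s δ_{i_s j_{σ(s)}}`. -/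
def DiagT {n k : ℕ} (σ : Equiv.Perm (Fin k)) (T : (Fin k → Fin n) → ℝ) :
    (Fin k → Fin n) → (Fin k → Fin n) → ℝ :=
  fun i j => T i * ∏ s, kdelta (i s) (j (σ s))

/-- The conjugation action `U S Uᵀ` of an `n×n` matrix `U` on a 2k-tensor `S`:
`(USUᵀ)^{i_1…i_k,j_1…j_k} = Σ_{p,q} S^{p_1…p_k,q_1…q_k} ∏_ν U^{i_ν p_ν} U^{j_ν q_ν}`. -/
def conjT2 {n k : ℕ} (U : Matrix (Fin n) (Fin n) ℝ)
    (S : (Fin k → Fin n) → (Fin k → Fin n) → ℝ) :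
    (Fin k → Fin n) → (Fin k → Fin n) → ℝ :=
  fun i j => ∑ p : Fin k → Fin n, ∑ q : Fin k → Fin n,
    S p q * ∏ ν, U (i ν) (p ν) * U (j ν) (q ν)

/-- The action of a 2k-tensor `S` on k matrices:
`S[H_1,…,H_k] = Σ_{p,q} S^{p_1…p_k,q_1…q_k} H_1^{p_1 q_1} ⋯ H_k^{p_k q_k}`. -/
def applyT2 {n k : ℕ} (S : (Fin k → Fin n) → (Fin k → Fin n) → ℝ)
    (H : Fin k → Matrix (Fin n) (Fin n) ℝ) : ℝ :=
  ∑ p : Fin k → Fin n, ∑ q : Fin k → Fin n, S p q * ∏ s, H s (p s) (q s)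

lemma delta_sum {n k : ℕ} (c : Fin k → Fin n) (f : (Fin k → Fin n) → ℝ) :
    ∑ b : Fin k → Fin n, (∏ s, kdelta (c s) (b s)) * f b = f c := by
  rw [Finset.sum_eq_single c]
  · simp [kdelta]
  · intro b _ hb
    obtain ⟨s, hs⟩ := Function.ne_iff.mp (Ne.symm hb)
    rw [Finset.prod_eq_zero (Finset.mem_univ s), zero_mul]
    simp [kdelta, hs]
  · simp

lemma delta_collapse {n k : ℕ} (σ : Equiv.Perm (Fin k)) (a : Fin k → Fin n)
    (g : (Fin k → Fin n) → ℝ) :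
    ∑ b : Fin k → Fin n, (∏ s, kdelta (a s) (b (σ s))) * g b = g (fun t => a (σ⁻¹ t)) := by
  have h : ∀ b : Fin k → Fin n,
      ∏ s, kdelta (a s) (b (σ s)) = ∏ t, kdelta (a (σ⁻¹ t)) (b t) := by
    intro b
    rw [← Equiv.prod_comp σ (fun t => kdelta (a (σ⁻¹ t)) (b t))]
    simp
  simp_rw [h]
  exact delta_sum _ g

/-- Theorem 4.4: with `H̃ᵢ = Uᵀ Hᵢ U` for an orthogonal `U`,
`⟨T, H̃_1 ∘_σ ⋯ ∘_σ H̃_k⟩ = (U (Diag^σ T) Uᵀ)[H_1,…,H_k]`. -/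
theorem inner_hadamard_eq_conj_DiagT {n k : ℕ} (T : (Fin k → Fin n) → ℝ)
    (H : Fin k → Matrix (Fin n) (Fin n) ℝ) (U : Matrix (Fin n) (Fin n) ℝ)
    (hU : Uᵀ * U = 1) (σ : Equiv.Perm (Fin k)) :
    tinner T (hadP σ (fun s => Uᵀ * H s * U)) = applyT2 (conjT2 U (DiagT σ T)) H := by
  simp only [tinner, hadP, applyT2, conjT2, DiagT]
  have hentry : ∀ (s : Fin k) (x y : Fin n),
      (Uᵀ * H s * U) x y = ∑ p, ∑ q, U p x * H s p q * U q y := by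
    intro s x y
    simp only [Matrix.mul_apply, Matrix.transpose_apply, Finset.sum_mul]
    rw [Finset.sum_comm]
  have hrhs : ∀ P Q : Fin k → Fin n,
      (∑ a : Fin k → Fin n, ∑ b : Fin k → Fin n,
        (T a * ∏ s, kdelta (a s) (b (σ s))) * ∏ ν, U (P ν) (a ν) * U (Q ν) (b ν)) =
      ∑ a : Fin k → Fin n, T a * ∏ ν, U (P ν) (a ν) * U (Q ν) (a (σ⁻¹ ν)) := by
    intro P Q
    refine Finset.sum_congr rfl fun a _ => ?_
    have := delta_collapse σ a (fun b => T a * ∏ ν, U (P ν) (a ν) * U (Q ν) (b ν))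
    simp only [mul_assoc] at this ⊢
    rw [← this]
    congr 1; ext b; ring
  simp_rw [hrhs, hentry, Fintype.prod_sum, Finset.mul_sum, Finset.sum_mul]
  rw [Finset.sum_comm]
  refine Finset.sum_congr rfl fun P _ => ?_
  rw [Finset.sum_comm]
  refine Finset.sum_congr rfl fun Q _ => Finset.sum_congr rfl fun a _ => ?_
  have hp : (∏ i, U (P i) (a i) * H i (P i) (Q i) * U (Q i) (a (σ⁻¹ i))) =
      (∏ ν, U (P ν) (a ν) * U (Q ν) (a (σ⁻¹ ν))) * ∏ s, H s (P s) (Q s) := by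
    rw [← Finset.prod_mul_distrib]
    exact Finset.prod_congr rfl fun s _ => by ring
  rw [hp]; ring
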